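/- A nonempty subset H of a generalized group G is a generalized subgroup of G (i.e., is itself a generalized group under the restricted operation, with identities and inverses as in G) if and only if for all a, b in H, a·b^{-1} ∈ H. -/
import Mathlib


/-- A generalized group: an associative operation where each element has its own
unique two-sided identity `e a` and an inverse relative to it. -/
structure GenGroup (G : Type*) where
  mul : G → G → G
  e : G → G
  inv : G → G
  mul_assoc : ∀ a b c : G, mul (mul a b) c = mul a (mul b c)
  e_mul : ∀ a : G, mul (e a) a = a
  mul_e : ∀ a : G, mul a (e a) = a
  e_unique : ∀ a u : G, mul u a = a → mul a u = a → u = e a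
  mul_inv : ∀ a : G, mul a (inv a) = e a
  inv_mul : ∀ a : G, mul (inv a) a = e a

lemma GenGroup.e_mul_e {G : Type*} (GG : GenGroup G) (a : G) :
    GG.mul (GG.e a) (GG.e a) = GG.e a := by
  calc GG.mul (GG.e a) (GG.e a) = GG.mul (GG.e a) (GG.mul a (GG.inv a)) := by
        rw [GG.mul_inv]
    _ = GG.mul (GG.mul (GG.e a) a) (GG.inv a) := by rw [GG.mul_assoc]
    _ = GG.mul a (GG.inv a) := by rw [GG.e_mul]
    _ = GG.e a := GG.mul_inv a

lemma GenGroup.e_e {G : Type*} (GG : GenGroup G) (a : G) :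
    GG.e (GG.e a) = GG.e a := by
  exact (GG.e_unique (GG.e a) (GG.e a) (GG.e_mul_e a) (GG.e_mul_e a)).symm

lemma GenGroup.e_inv {G : Type*} (GG : GenGroup G) (a : G) :
    GG.e (GG.inv a) = GG.e a := by
  have h1 : GG.mul (GG.e (GG.inv a)) (GG.e a) = GG.e a := by
    calc GG.mul (GG.e (GG.inv a)) (GG.e a)
        = GG.mul (GG.e (GG.inv a)) (GG.mul (GG.inv a) a) := by rw [GG.inv_mul]
      _ = GG.mul (GG.mul (GG.e (GG.inv a)) (GG.inv a)) a := by rw [GG.mul_assoc]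
      _ = GG.mul (GG.inv a) a := by rw [GG.e_mul]
      _ = GG.e a := GG.inv_mul a
  have h2 : GG.mul (GG.e a) (GG.e (GG.inv a)) = GG.e a := by
    calc GG.mul (GG.e a) (GG.e (GG.inv a))
        = GG.mul (GG.mul a (GG.inv a)) (GG.e (GG.inv a)) := by rw [GG.mul_inv]
      _ = GG.mul a (GG.mul (GG.inv a) (GG.e (GG.inv a))) := by rw [GG.mul_assoc]
      _ = GG.mul a (GG.inv a) := by rw [GG.mul_e]
      _ = GG.e a := GG.mul_inv a
  have := GG.e_unique (GG.e a) (GG.e (GG.inv a)) h1 h2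
  rw [this, GG.e_e]

lemma GenGroup.e_mul_inv {G : Type*} (GG : GenGroup G) (a : G) :
    GG.mul (GG.e a) (GG.inv a) = GG.inv a := by
  conv_lhs => rw [← GG.e_inv a]
  exact GG.e_mul (GG.inv a)

lemma GenGroup.inv_inv {G : Type*} (GG : GenGroup G) (a : G) :
    GG.inv (GG.inv a) = a := by
  calc GG.inv (GG.inv a)
      = GG.mul (GG.e (GG.inv (GG.inv a))) (GG.inv (GG.inv a)) := (GG.e_mul _).symm
    _ = GG.mul (GG.e a) (GG.inv (GG.inv a)) := by rw [GG.e_inv, GG.e_inv]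
    _ = GG.mul (GG.mul a (GG.inv a)) (GG.inv (GG.inv a)) := by rw [GG.mul_inv]
    _ = GG.mul a (GG.mul (GG.inv a) (GG.inv (GG.inv a))) := by rw [GG.mul_assoc]
    _ = GG.mul a (GG.e (GG.inv a)) := by rw [GG.mul_inv]
    _ = GG.mul a (GG.e a) := by rw [GG.e_inv]
    _ = a := GG.mul_e a

/-- A nonempty subset `H` of a generalized group is a generalized subgroup
(closed under the operation, and containing the identities and the inverses of
its elements, so that it is itself a generalized group under the restricted
operation) if and only if `a * b⁻¹ ∈ H` for all `a, b ∈ H`. -/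
theorem genSubgroup_iff {G : Type*} [Nonempty G] (GG : GenGroup G)
    (H : Set G) (hH : H.Nonempty) :
    ((∀ a ∈ H, ∀ b ∈ H, GG.mul a b ∈ H) ∧ (∀ a ∈ H, GG.e a ∈ H) ∧
        (∀ a ∈ H, GG.inv a ∈ H)) ↔
      (∀ a ∈ H, ∀ b ∈ H, GG.mul a (GG.inv b) ∈ H) := by
  constructor
  · rintro ⟨hmul, _, hinv⟩ a ha b hb
    exact hmul a ha _ (hinv b hb)
  · intro h
    have he : ∀ a ∈ H, GG.e a ∈ H := fun a ha => by
      have := h a ha a ha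
      rwa [GG.mul_inv] at this
    have hinv : ∀ a ∈ H, GG.inv a ∈ H := fun a ha => by
      have := h (GG.e a) (he a ha) a ha
      rwa [GG.e_mul_inv] at this
    refine ⟨fun a ha b hb => ?_, he, hinv⟩
    have := h a ha (GG.inv b) (hinv b hb)
    rwa [GG.inv_inv] at this
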